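/- arXiv:1312.2283 — 2 statements merged into one kernel-verified Lean document; each statement's English description precedes it below -/
import Mathlib

section
/- Let p(x) = Σ_{k=0}^n a_k x^k be a real polynomial of degree n. If α is a real number with α ≥ 0 or α ≤ −n, then the number of non-real zeros of Σ_{k=0}^n (k+α) a_k x^k is at most the number of non-real zeros of p (counted with multiplicity). -/
open Polynomial Finset

open scoped Classical in
/-- Number of non-real complex zeros of a real polynomial, counted with multiplicity. -/
noncomputable def ZC (p : Polynomial ℝ) : ℕ :=
  (((p.map (algebraMap ℝ ℂ)).roots).filter (fun z => z.im ≠ 0)).card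

/-- Number of real zeros of a real polynomial, counted with multiplicity. -/
noncomputable def ZR (p : Polynomial ℝ) : ℕ := p.roots.card

open scoped Classical in
noncomputable def ZCc (F : Polynomial ℂ) : ℕ :=
  ((F.roots).filter (fun z => z.im ≠ 0)).card

lemma ZCc_mul {F G : Polynomial ℂ} (hF : F ≠ 0) (hG : G ≠ 0) :
    ZCc (F * G) = ZCc F + ZCc G := by
  unfold ZCc
  rw [roots_mul (mul_ne_zero hF hG), Multiset.filter_add, Multiset.card_add]

lemma ZCc_C (c : ℂ) : ZCc (C c) = 0 := by
  unfold ZCc; rw [roots_C]; simp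

lemma ZCc_X_sub_C (z : ℂ) : ZCc (X - C z) = if z.im ≠ 0 then 1 else 0 := by
  unfold ZCc
  rw [roots_X_sub_C]
  by_cases h : z.im ≠ 0 <;> simp [Multiset.filter_singleton, h]

lemma reflect_one_X_sub_C (z : ℂ) : reflect 1 (X - C z) = 1 - C z * X := by
  ext i
  rcases i with _ | _ | i <;>
    simp [coeff_reflect, revAt, Polynomial.revAtFun, coeff_one, coeff_X, sub_eq_add_neg]

lemma ZCc_one_sub_C_mul_X (z : ℂ) : ZCc (1 - C z * X) ≤ ZCc (X - C z) := by
  rcases eq_or_ne z 0 with rfl | hz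
  · simp only [map_zero, zero_mul, sub_zero]
    unfold ZCc
    simp [roots_one]
  · have h1 : (1 - C z * X) = C (-z) * (X - C z⁻¹) := by
      rw [mul_sub, ← C_mul]
      rw [show (-z * z⁻¹) = -1 by field_simp]
      simp [sub_eq_add_neg]; ring
    have him : (z⁻¹).im ≠ 0 ↔ z.im ≠ 0 := by
      rw [Complex.inv_im]
      have h2 : Complex.normSq z ≠ 0 := by simpa using Complex.normSq_pos.mpr hz |>.ne'
      constructor <;> intro h hc <;> apply h
      · rw [hc]; simp
      · field_simp at hc; simpa using hc
    rw [h1]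
    unfold ZCc
    rw [roots_C_mul _ (neg_ne_zero.mpr hz), roots_X_sub_C, roots_X_sub_C]
    classical
    by_cases h : z.im ≠ 0 <;> simp [Multiset.filter_singleton, him, h, hz]

lemma ZCc_zero : ZCc 0 = 0 := by unfold ZCc; simp

lemma ZCc_C_mul_X_pow (c : ℂ) (N : ℕ) : ZCc (C c * X ^ N) = 0 := by
  rcases eq_or_ne c 0 with rfl | hc
  · simp [ZCc_zero]
  · unfold ZCc
    rw [roots_C_mul _ hc, roots_pow, roots_X, Multiset.nsmul_singleton]
    rw [Multiset.filter_eq_nil.mpr]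
    · simp
    · intro a ha
      rw [Multiset.eq_of_mem_replicate ha]
      simp

lemma ZCc_reflect_le (F : Polynomial ℂ) (N : ℕ) (hF : F.natDegree ≤ N) :
    ZCc (reflect N F) ≤ ZCc F := by
  suffices H : ∀ d, ∀ F : Polynomial ℂ, F.natDegree ≤ d → ∀ N, F.natDegree ≤ N →
      ZCc (reflect N F) ≤ ZCc F from H F.natDegree F le_rfl N hF
  clear hF F N
  intro d
  induction d with
  | zero =>
    intro F hFd N hFN
    rcases eq_or_ne F 0 with rfl | hF0
    · simp [ZCc_zero]
    obtain ⟨c, rfl⟩ := natDegree_eq_zero.mp (Nat.le_zero.mp hFd)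
    rw [reflect_C]
    simp [ZCc_C_mul_X_pow]
  | succ d IH =>
  intro F hFd N hFN
  rcases eq_or_ne F 0 with rfl | hF0
  · simp [ZCc_zero]
  rcases Nat.eq_zero_or_pos F.natDegree with hd0 | hd1
  · obtain ⟨c, rfl⟩ := natDegree_eq_zero.mp hd0
    rw [reflect_C]
    simp [ZCc_C_mul_X_pow]
  · -- F has positive degree, so it has a root
    have hdeg : 0 < F.degree := natDegree_pos_iff_degree_pos.mp hd1
    obtain ⟨z, hz⟩ := Complex.exists_root hdeg
    obtain ⟨G, hG⟩ := (dvd_iff_isRoot.mpr hz)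
    have hG0 : G ≠ 0 := by rintro rfl; simp at hG; exact hF0 hG
    have hXz : (X - C z) ≠ 0 := X_sub_C_ne_zero z
    have hnd : F.natDegree = 1 + G.natDegree := by
      rw [hG, natDegree_mul hXz hG0, natDegree_X_sub_C]
    have hN1 : 1 ≤ N := le_trans (by omega) hFN
    have hGN : G.natDegree ≤ N - 1 := by omega
    have hrefl : reflect N F = reflect 1 (X - C z) * reflect (N - 1) G := by
      rw [hG, ← reflect_mul (X - C z) G (by rw [natDegree_X_sub_C]) hGN]
      congr 1
      omega
    have hr1 : reflect 1 (X - C z) ≠ 0 := by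
      rw [Ne, reflect_eq_zero_iff]; exact hXz
    have hr2 : reflect (N - 1) G ≠ 0 := by
      rw [Ne, reflect_eq_zero_iff]; exact hG0
    rw [hrefl, ZCc_mul hr1 hr2, hG, ZCc_mul hXz hG0]
    have e1 : ZCc (reflect 1 (X - C z)) ≤ ZCc (X - C z) := by
      rw [reflect_one_X_sub_C]; exact ZCc_one_sub_C_mul_X z
    have e2 : ZCc (reflect (N - 1) G) ≤ ZCc G :=
      IH G (by omega) (N - 1) hGN
    omega

lemma ZC_eq_ZCc (f : Polynomial ℝ) : ZC f = ZCc (f.map (algebraMap ℝ ℂ)) := rfl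

lemma map_C_ne_zero {f : Polynomial ℝ} (hf : f ≠ 0) : f.map (algebraMap ℝ ℂ) ≠ 0 :=
  (Polynomial.map_ne_zero_iff (algebraMap ℝ ℂ).injective).mpr hf

lemma ZC_mul {f g : Polynomial ℝ} (hf : f ≠ 0) (hg : g ≠ 0) :
    ZC (f * g) = ZC f + ZC g := by
  rw [ZC_eq_ZCc, Polynomial.map_mul, ZCc_mul (map_C_ne_zero hf) (map_C_ne_zero hg)]
  rfl

lemma ZR_add_ZC {f : Polynomial ℝ} (hf : f ≠ 0) : ZR f + ZC f = f.natDegree := by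
  obtain ⟨g, hg⟩ := prod_multiset_X_sub_C_dvd f
  set P : Polynomial ℝ := (f.roots.map fun a => X - C a).prod with hP
  have hPm : P.Monic := monic_multiset_prod_of_monic _ _ (fun a _ => monic_X_sub_C a)
  have hP0 : P ≠ 0 := hPm.ne_zero
  have hg0 : g ≠ 0 := by rintro rfl; rw [mul_zero] at hg; exact hf hg
  have hroots : f.roots = f.roots + g.roots := by
    conv_lhs => rw [hg]
    rw [roots_mul (mul_ne_zero hP0 hg0), hP, roots_multiset_prod_X_sub_C]
  have hgroots : g.roots = 0 := by
    have := congrArg Multiset.card hroots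
    rw [Multiset.card_add] at this
    exact Multiset.card_eq_zero.mp (by omega)
  have hPdeg : P.natDegree = Multiset.card f.roots := by
    rw [hP, natDegree_multiset_prod_of_monic _ (fun a ha => by
      simp only [Multiset.mem_map] at ha
      obtain ⟨r, _, rfl⟩ := ha
      exact monic_X_sub_C r), Multiset.map_map]
    simp [Function.comp_def, natDegree_X_sub_C, Multiset.map_const', Multiset.sum_replicate]
  have hdeg : f.natDegree = Multiset.card f.roots + g.natDegree := by
    conv_lhs => rw [hg]
    rw [natDegree_mul hP0 hg0, hPdeg]
  have hZCP : ZC P = 0 := by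
    rw [ZC_eq_ZCc]
    unfold ZCc
    rw [hP, Polynomial.map_multiset_prod, Multiset.map_map]
    have hmm : Multiset.map (Polynomial.map (algebraMap ℝ ℂ) ∘ fun a => X - C a) f.roots
        = Multiset.map (fun z => X - C z) (f.roots.map (fun a => Complex.ofReal a)) := by
      rw [Multiset.map_map]
      apply Multiset.map_congr rfl
      intro a _
      simp [Function.comp]
    rw [hmm, roots_multiset_prod_X_sub_C]
    rw [Multiset.filter_eq_nil.mpr]
    · simp
    · intro z hz
      simp only [Multiset.mem_map] at hz
      obtain ⟨r, _, rfl⟩ := hz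
      simp
  have hZCg : ZC g = g.natDegree := by
    rw [ZC_eq_ZCc]
    unfold ZCc
    have hsplit := IsAlgClosed.splits (g.map (algebraMap ℝ ℂ))
    have hcard : (g.map (algebraMap ℝ ℂ)).roots.card = g.natDegree := by
      rw [← Splits.natDegree_eq_card_roots hsplit, natDegree_map]
    rw [Multiset.filter_eq_self.mpr, hcard]
    intro z hz hzim
    have hzroot : (g.map (algebraMap ℝ ℂ)).IsRoot z := (mem_roots (map_C_ne_zero hg0)).mp hz
    have hzre : (algebraMap ℝ ℂ) z.re = z := (Complex.ext rfl (by simp [hzim]))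
    have h2 : algebraMap ℝ ℂ (g.eval z.re) = 0 := by
      rw [← eval₂_at_apply, ← eval_map, hzre]
      exact hzroot
    have h3 : g.IsRoot z.re := by simpa using h2
    have : z.re ∈ g.roots := (mem_roots hg0).mpr h3
    rw [hgroots] at this
    simp at this
  have hZRf : ZR f = Multiset.card f.roots := rfl
  have hm : ZC f = ZC P + ZC g := by
    conv_lhs => rw [hg]
    exact ZC_mul hP0 hg0
  omega

open scoped Classical in
lemma sum_count_eq_card {u : Finset ℝ} {R : Multiset ℝ} (h : R.toFinset ⊆ u) :
    ∑ x ∈ u, R.count x = Multiset.card R := by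
  rw [← Multiset.toFinset_sum_count_eq R]
  exact (Finset.sum_subset h (fun x _ hx =>
    Multiset.count_eq_zero.mpr (fun hc => hx (Multiset.mem_toFinset.mpr hc)))).symm

open scoped Classical in
lemma sum_count_le_card (u : Finset ℝ) (R : Multiset ℝ) :
    ∑ x ∈ u, R.count x ≤ Multiset.card R := by
  calc ∑ x ∈ u, R.count x ≤ ∑ x ∈ u ∪ R.toFinset, R.count x :=
        Finset.sum_le_sum_of_subset Finset.subset_union_left
    _ = Multiset.card R := sum_count_eq_card Finset.subset_union_right

-- multiplicity lemmas
lemma rootMult_le_q (p : Polynomial ℝ) (α : ℝ) (x : ℝ)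
    (hq : X * derivative p + C α * p ≠ 0) :
    rootMultiplicity x p ≤ rootMultiplicity x (X * derivative p + C α * p) + 1 := by
  set m := rootMultiplicity x p with hm
  rcases Nat.eq_zero_or_pos m with h0 | hpos
  · omega
  have hdvd1 : (X - C x) ^ (m - 1) ∣ derivative p := by
    have h1 : m - 1 ≤ rootMultiplicity x (derivative p) :=
      rootMultiplicity_sub_one_le_derivative_rootMultiplicity p x
    exact dvd_trans (pow_dvd_pow _ h1) (pow_rootMultiplicity_dvd _ x)
  have hdvd2 : (X - C x) ^ (m - 1) ∣ p :=
    dvd_trans (pow_dvd_pow _ (by omega)) (pow_rootMultiplicity_dvd p x)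
  have hdvd : (X - C x) ^ (m - 1) ∣ X * derivative p + C α * p :=
    dvd_add (Dvd.dvd.mul_left hdvd1 X) (Dvd.dvd.mul_left hdvd2 (C α))
  have := (le_rootMultiplicity_iff hq).mpr hdvd
  omega

lemma rootMult_zero_le_q (p : Polynomial ℝ) (α : ℝ)
    (hq : X * derivative p + C α * p ≠ 0) :
    rootMultiplicity 0 p ≤ rootMultiplicity 0 (X * derivative p + C α * p) := by
  set m := rootMultiplicity 0 p with hm
  rcases Nat.eq_zero_or_pos m with h0 | hpos
  · omega
  have hdvd1 : (X : Polynomial ℝ) ^ m ∣ X * derivative p := by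
    have h1 : m - 1 ≤ rootMultiplicity 0 (derivative p) :=
      rootMultiplicity_sub_one_le_derivative_rootMultiplicity p 0
    have h2 : (X : Polynomial ℝ) ^ (m - 1) ∣ derivative p := by
      have := dvd_trans (pow_dvd_pow _ h1) (pow_rootMultiplicity_dvd (derivative p) 0)
      simpa using this
    calc (X : Polynomial ℝ) ^ m = X * X ^ (m - 1) := by
          rw [← pow_succ']; congr 1; omega
      _ ∣ X * derivative p := mul_dvd_mul dvd_rfl h2
  have hdvd2 : (X : Polynomial ℝ) ^ m ∣ C α * p := by
    have := Dvd.dvd.mul_left (pow_rootMultiplicity_dvd p 0) (C α)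
    simpa using this
  have hdvd : ((X : Polynomial ℝ) - C 0) ^ m ∣ X * derivative p + C α * p := by
    simpa using dvd_add hdvd1 hdvd2
  exact (le_rootMultiplicity_iff hq).mpr hdvd

lemma q_eval (p : Polynomial ℝ) (α t : ℝ) :
    (X * derivative p + C α * p).eval t = t * (derivative p).eval t + α * p.eval t := by
  simp

lemma rolle_pos (p : Polynomial ℝ) (α : ℝ) (hα : 0 < α) {x y : ℝ} (hxy : x < y) (hx0 : 0 ≤ x)
    (hx : x ^ α * p.eval x = 0) (hy : y ^ α * p.eval y = 0) :
    ∃ c ∈ Set.Ioo x y, (X * derivative p + C α * p).eval c = 0 := by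
  set f : ℝ → ℝ := fun t => t ^ α * p.eval t with hf
  have hcont : ContinuousOn f (Set.Icc x y) := by
    apply ContinuousOn.mul
    · exact fun t _ => (Real.continuousAt_rpow_const t α (Or.inr hα.le)).continuousWithinAt
    · exact p.continuousOn
  have hderiv : ∀ t ∈ Set.Ioo x y,
      HasDerivAt f (t ^ (α - 1) * (X * derivative p + C α * p).eval t) t := by
    intro t ht
    have htpos : 0 < t := lt_of_le_of_lt hx0 ht.1
    have h1 : HasDerivAt (fun u : ℝ => u ^ α) (α * t ^ (α - 1)) t :=
      Real.hasDerivAt_rpow_const (Or.inl htpos.ne')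
    have h2 := p.hasDerivAt t
    have h3 := h1.mul h2
    refine HasDerivAt.congr_deriv h3 ?_
    have hta : t ^ α = t ^ (α - 1) * t := by
      rw [← Real.rpow_add_one htpos.ne' (α - 1)]
      norm_num
    rw [q_eval, hta]
    ring
  obtain ⟨c, hc, hc0⟩ := exists_hasDerivAt_eq_zero hxy hcont (hx.trans hy.symm) hderiv
  refine ⟨c, hc, ?_⟩
  have hcpos : 0 < c := lt_of_le_of_lt hx0 hc.1
  have := (Real.rpow_pos_of_pos hcpos (α - 1)).ne'
  rcases mul_eq_zero.mp hc0 with h | h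
  · exact absurd h this
  · exact h

lemma rolle_neg (p : Polynomial ℝ) (α : ℝ) (hα : 0 < α) {x y : ℝ} (hxy : x < y) (hy0 : y ≤ 0)
    (hx : (-x) ^ α * p.eval x = 0) (hy : (-y) ^ α * p.eval y = 0) :
    ∃ c ∈ Set.Ioo x y, (X * derivative p + C α * p).eval c = 0 := by
  set f : ℝ → ℝ := fun t => (-t) ^ α * p.eval t with hf
  have hcont : ContinuousOn f (Set.Icc x y) := by
    apply ContinuousOn.mul
    · exact fun t _ => ((Real.continuousAt_rpow_const (-t) α (Or.inr hα.le)).comp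
        (continuousAt_neg)).continuousWithinAt
    · exact p.continuousOn
  have hderiv : ∀ t ∈ Set.Ioo x y,
      HasDerivAt f (-((-t) ^ (α - 1) * (X * derivative p + C α * p).eval t)) t := by
    intro t ht
    have htneg : t < 0 := lt_of_lt_of_le ht.2 hy0
    have htpos : 0 < -t := neg_pos.mpr htneg
    have h1 : HasDerivAt (fun u : ℝ => (-u) ^ α) (α * (-t) ^ (α - 1) * (-1)) t :=
      (Real.hasDerivAt_rpow_const (p := α) (Or.inl htpos.ne')).comp t (hasDerivAt_neg t)
    have h2 := p.hasDerivAt t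
    have h3 := h1.mul h2
    refine HasDerivAt.congr_deriv h3 ?_
    have hta : (-t) ^ α = (-t) ^ (α - 1) * (-t) := by
      rw [← Real.rpow_add_one htpos.ne' (α - 1)]
      norm_num
    rw [q_eval, hta]
    ring
  obtain ⟨c, hc, hc0⟩ := exists_hasDerivAt_eq_zero hxy hcont (hx.trans hy.symm) hderiv
  refine ⟨c, hc, ?_⟩
  have hcneg : 0 < -c := neg_pos.mpr (lt_of_lt_of_le hc.2 hy0)
  have hne := (Real.rpow_pos_of_pos hcneg (α - 1)).ne'
  have := neg_eq_zero.mp hc0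
  rcases mul_eq_zero.mp this with h | h
  · exact absurd h hne
  · exact h

open scoped Classical in
lemma ZR_le_q (p : Polynomial ℝ) (hp : p ≠ 0) (α : ℝ) (hα : 0 < α)
    (hq : X * derivative p + C α * p ≠ 0) :
    Multiset.card p.roots ≤ Multiset.card (X * derivative p + C α * p).roots := by
  classical
  set q := X * derivative p + C α * p with hqdef
  set s : Finset ℝ := insert 0 p.roots.toFinset with hs
  set t : Finset ℝ := q.roots.toFinset with ht
  have hvp : ∀ z ∈ s, z ^ α * p.eval z = 0 := by
    intro z hz
    rcases Finset.mem_insert.mp hz with rfl | hz'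
    · rw [Real.zero_rpow hα.ne', zero_mul]
    · rw [show p.eval z = 0 from (mem_roots hp).mp (Multiset.mem_toFinset.mp hz'), mul_zero]
  have hvn : ∀ z ∈ s, (-z) ^ α * p.eval z = 0 := by
    intro z hz
    rcases Finset.mem_insert.mp hz with rfl | hz'
    · rw [neg_zero, Real.zero_rpow hα.ne', zero_mul]
    · rw [show p.eval z = 0 from (mem_roots hp).mp (Multiset.mem_toFinset.mp hz'), mul_zero]
  have hinter : s.card ≤ (t \ s).card + 1 := by
    apply Finset.card_le_diff_of_interleaved
    intro x hx y hy hxy hxy'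
    have h0 : ¬(x < 0 ∧ 0 < y) := fun hc => (hxy' 0 (Finset.mem_insert_self 0 _)) ⟨hc.1, hc.2⟩
    have key : ∃ c ∈ Set.Ioo x y, q.eval c = 0 := by
      rcases le_or_gt 0 x with hx0 | hx0
      · exact rolle_pos p α hα hxy hx0 (hvp x hx) (hvp y hy)
      · have hy0 : y ≤ 0 := by
          by_contra h
          push_neg at h
          exact h0 ⟨hx0, h⟩
        exact rolle_neg p α hα hxy hy0 (hvn x hx) (hvn y hy)
    obtain ⟨c, hcIoo, hcq⟩ := key
    exact ⟨c, Multiset.mem_toFinset.mpr ((mem_roots hq).mpr hcq), hcIoo.1, hcIoo.2⟩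
  have hsub : p.roots.toFinset ⊆ s := Finset.subset_insert 0 _
  have e1 : Multiset.card p.roots = ∑ x ∈ s, p.roots.count x := (sum_count_eq_card hsub).symm
  have h0s : (0 : ℝ) ∈ s := Finset.mem_insert_self 0 _
  have e2 : ∑ x ∈ s, p.roots.count x
      = p.roots.count 0 + ∑ x ∈ s.erase 0, p.roots.count x :=
    (Finset.add_sum_erase s (fun x => p.roots.count x) h0s).symm
  have e3 : p.roots.count 0 ≤ q.roots.count 0 := by
    rw [count_roots, count_roots]
    exact rootMult_zero_le_q p α hq
  have e4 : ∑ x ∈ s.erase 0, p.roots.count x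
      ≤ ∑ x ∈ s.erase 0, (q.roots.count x + 1) := by
    apply Finset.sum_le_sum
    intro x _
    rw [count_roots, count_roots]
    exact rootMult_le_q p α x hq
  have e5 : ∑ x ∈ s.erase 0, (q.roots.count x + 1)
      = (∑ x ∈ s.erase 0, q.roots.count x) + (s.card - 1) := by
    rw [Finset.sum_add_distrib]
    congr 1
    rw [Finset.sum_const, smul_eq_mul, mul_one, Finset.card_erase_of_mem h0s]
  have e6 : q.roots.count 0 + ∑ x ∈ s.erase 0, q.roots.count x = ∑ x ∈ s, q.roots.count x :=
    Finset.add_sum_erase s (fun x => q.roots.count x) h0s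
  have e7 : (t \ s).card ≤ ∑ x ∈ t \ s, q.roots.count x := by
    rw [Finset.card_eq_sum_ones]
    apply Finset.sum_le_sum
    intro x hx
    exact Multiset.one_le_count_iff_mem.mpr
      (Multiset.mem_toFinset.mp (Finset.mem_sdiff.mp hx).1)
  have e8 : ∑ x ∈ s, q.roots.count x + ∑ x ∈ t \ s, q.roots.count x
      = ∑ x ∈ s ∪ (t \ s), q.roots.count x := (Finset.sum_union Finset.disjoint_sdiff).symm
  have e9 : ∑ x ∈ s ∪ (t \ s), q.roots.count x ≤ Multiset.card q.roots :=
    sum_count_le_card _ _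
  have hscard : 1 ≤ s.card := Finset.card_pos.mpr ⟨0, h0s⟩
  omega

lemma ZC_zero : ZC 0 = 0 := by rw [ZC_eq_ZCc, Polynomial.map_zero]; exact ZCc_zero

lemma ZC_X : ZC X = 0 := by
  rw [ZC_eq_ZCc, Polynomial.map_X]
  unfold ZCc
  rw [roots_X]
  simp [Multiset.filter_singleton]

lemma ZC_C (c : ℝ) : ZC (C c) = 0 := by
  rw [ZC_eq_ZCc, Polynomial.map_C]; exact ZCc_C _

lemma ZC_derivative_le (p : Polynomial ℝ) : ZC (derivative p) ≤ ZC p := by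
  rcases eq_or_ne (derivative p) 0 with hp' | hp'
  · rw [hp', ZC_zero]; exact Nat.zero_le _
  have hp : p ≠ 0 := by rintro rfl; simp at hp'
  have A := ZR_add_ZC hp'
  have B := natDegree_derivative_le p
  have C := ZR_add_ZC hp
  have D : Multiset.card p.roots ≤ Multiset.card (derivative p).roots + 1 :=
    card_roots_le_derivative p
  unfold ZR at A C
  omega

lemma ZC_q_le (p : Polynomial ℝ) (α : ℝ) (hα : 0 ≤ α) :
    ZC (X * derivative p + C α * p) ≤ ZC p := by
  set q := X * derivative p + C α * p with hqdef
  rcases eq_or_ne q 0 with hq | hq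
  · rw [hq, ZC_zero]; exact Nat.zero_le _
  have hp : p ≠ 0 := by rintro rfl; simp [hqdef] at hq
  rcases hα.eq_or_lt with rfl | hα'
  · -- α = 0 : q = X * derivative p
    have hq2 : q = X * derivative p := by rw [hqdef]; simp
    have hp' : derivative p ≠ 0 := by
      rintro h
      rw [hq2, h, mul_zero] at hq
      exact hq rfl
    rw [hq2, ZC_mul X_ne_zero hp', ZC_X, zero_add]
    exact ZC_derivative_le p
  · -- α > 0
    rcases Nat.eq_zero_or_pos p.natDegree with hn0 | hn1
    · obtain ⟨c, rfl⟩ := natDegree_eq_zero.mp hn0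
      have : q = C (α * c) := by rw [hqdef]; simp [C_mul]
      rw [this, ZC_C]
      exact Nat.zero_le _
    · set n := p.natDegree with hn
      have hqdeg : q.natDegree = n := by
        apply le_antisymm
        · refine (natDegree_add_le _ _).trans (max_le ?_ ?_)
          · refine (natDegree_mul_le).trans ?_
            have := natDegree_derivative_le p
            rw [natDegree_X]
            omega
          · refine (natDegree_mul_le).trans ?_
            rw [natDegree_C]
            omega
        · apply le_natDegree_of_ne_zero
          have hcn : q.coeff n = (n + α) * p.coeff n := by
            rw [hqdef, coeff_add, coeff_C_mul]
            have h1 : (X * derivative p).coeff n = p.coeff n * n := by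
              obtain ⟨m, hm⟩ : ∃ m, n = m + 1 := ⟨n - 1, by omega⟩
              rw [hm, coeff_X_mul, coeff_derivative]
              push_cast
              ring
            rw [h1]
            ring
          rw [hcn]
          apply mul_ne_zero
          · positivity
          · exact leadingCoeff_ne_zero.mpr hp
      have A := ZR_add_ZC hp
      have B := ZR_add_ZC hq
      have D : Multiset.card p.roots ≤ Multiset.card q.roots := ZR_le_q p hp α hα' hq
      unfold ZR at A B
      omega

lemma coeff_q (f : Polynomial ℝ) (β : ℝ) (i : ℕ) :
    (X * derivative f + C β * f).coeff i = ((i : ℝ) + β) * f.coeff i := by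
  rcases i with _ | m
  · rw [coeff_add, mul_coeff_zero, coeff_X_zero, coeff_C_mul]
    push_cast
    ring
  · rw [coeff_add, coeff_X_mul, coeff_derivative, coeff_C_mul]
    push_cast
    ring

lemma sum_eq_q (p : Polynomial ℝ) {n : ℕ} (hpn : p.natDegree ≤ n) (α : ℝ) :
    (∑ k ∈ Finset.range (n + 1), C ((k : ℝ) + α) * C (p.coeff k) * X ^ k)
      = X * derivative p + C α * p := by
  ext i
  rw [coeff_q, finset_sum_coeff]
  have hterm : ∀ b ∈ Finset.range (n + 1), (C ((b : ℝ) + α) * C (p.coeff b) * X ^ b).coeff i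
      = if i = b then ((b : ℝ) + α) * p.coeff b else 0 := by
    intro b _
    rw [← C_mul, coeff_C_mul, coeff_X_pow, mul_ite, mul_one, mul_zero]
  rw [Finset.sum_congr rfl hterm]
  rw [Finset.sum_ite_eq (Finset.range (n + 1)) i (fun k => ((k : ℝ) + α) * p.coeff k)]
  rcases le_or_gt i n with h | h
  · rw [if_pos (Finset.mem_range.mpr (by omega))]
  · rw [if_neg (by simp only [Finset.mem_range]; omega), coeff_eq_zero_of_natDegree_lt (lt_of_le_of_lt hpn h), mul_zero]

lemma mirror_identity (p : Polynomial ℝ) {n : ℕ} (hpn : p.natDegree ≤ n) (α : ℝ) :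
    X * derivative p + C α * p
      = -(reflect n (X * derivative (reflect n p) + C (-(n : ℝ) - α) * reflect n p)) := by
  ext i
  rw [coeff_q, coeff_neg, coeff_reflect, coeff_q, coeff_reflect, revAt_invol]
  rcases le_or_gt i n with h | h
  · rw [revAt_le h]
    push_cast [h]
    ring
  · rw [coeff_eq_zero_of_natDegree_lt (lt_of_le_of_lt hpn h)]
    ring

lemma ZC_neg (f : Polynomial ℝ) : ZC (-f) = ZC f := by
  rcases eq_or_ne f 0 with rfl | hf
  · rw [neg_zero]
  · have : -f = C (-1) * f := by
      have h1 : (C (-1) : Polynomial ℝ) = -1 := by simp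
      rw [h1, neg_one_mul]
    rw [this, ZC_eq_ZCc, Polynomial.map_mul, Polynomial.map_C]
    unfold ZCc
    rw [roots_C_mul _ (by norm_num)]
    rfl

lemma natDegree_reflect_le (f : Polynomial ℝ) {n : ℕ} (hf : f.natDegree ≤ n) :
    (reflect n f).natDegree ≤ n := by
  apply natDegree_le_iff_coeff_eq_zero.mpr
  intro m hm
  rw [coeff_reflect]
  have : revAt n m = m := revAt_eq_self_of_lt hm
  rw [this]
  exact coeff_eq_zero_of_natDegree_lt (lt_of_le_of_lt hf hm)

lemma ZC_reflect_le (f : Polynomial ℝ) (n : ℕ) (hf : f.natDegree ≤ n) :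
    ZC (reflect n f) ≤ ZC f := by
  rw [ZC_eq_ZCc, ZC_eq_ZCc, ← reflect_map]
  exact ZCc_reflect_le _ n (le_trans natDegree_map_le hf)

lemma q_natDegree_le (f : Polynomial ℝ) (β : ℝ) {n : ℕ} (hf : f.natDegree ≤ n) :
    (X * derivative f + C β * f).natDegree ≤ n := by
  refine (natDegree_add_le _ _).trans (max_le ?_ ?_)
  · rcases eq_or_ne (derivative f) 0 with h | h
    · simp [h]
    · refine (natDegree_mul_le).trans ?_
      have h2 := natDegree_derivative_le f
      have h3 : f.natDegree ≠ 0 := by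
        intro h4
        exact h (derivative_of_natDegree_zero h4)
      rw [natDegree_X]
      omega
  · refine (natDegree_mul_le).trans ?_
    rw [natDegree_C]
    omega

theorem stmt3 (p : Polynomial ℝ) (n : ℕ) (hn : p.degree = n)
    (α : ℝ) (hα : 0 ≤ α ∨ α ≤ -(n : ℝ)) :
    ZC (∑ k ∈ Finset.range (n + 1), C ((k : ℝ) + α) * C (p.coeff k) * X ^ k) ≤ ZC p := by
  have hp : p ≠ 0 := by
    rintro rfl
    rw [degree_zero] at hn
    exact absurd hn (by simp)
  have hnd : p.natDegree = n := natDegree_eq_of_degree_eq_some hn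
  rw [sum_eq_q p hnd.le α]
  rcases hα with hα | hα
  · exact ZC_q_le p α hα
  · set β := -(n : ℝ) - α with hβdef
    have hβ : 0 ≤ β := by rw [hβdef]; linarith
    rw [mirror_identity p hnd.le α, ZC_neg]
    have hrdeg : (reflect n p).natDegree ≤ n := natDegree_reflect_le p hnd.le
    calc ZC (reflect n (X * derivative (reflect n p) + C (-(n : ℝ) - α) * reflect n p))
        ≤ ZC (X * derivative (reflect n p) + C (-(n : ℝ) - α) * reflect n p) :=
          ZC_reflect_le _ n (q_natDegree_le _ _ hrdeg)
      _ ≤ ZC (reflect n p) := ZC_q_le (reflect n p) _ hβ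
      _ ≤ ZC p := ZC_reflect_le p n hnd.le
end

section
/- For any real a > −1, the operator Ψ_a p := −x·p' + (x−(a+1))·p is a complex zero decreasing operator: for every real polynomial p, the number of non-real zeros of −x·p'(x) + (x−(a+1))·p(x) is at most the number of non-real zeros of p (both counted with multiplicity). -/
open Polynomial Finset

/-- The differential operator Ψₐ = -xD + (x-(a+1))I on ℝ[x]. -/
noncomputable def Psi (a : ℝ) (p : Polynomial ℝ) : Polynomial ℝ :=
  -X * derivative p + (X - C (a + 1)) * p

open Set Real in
lemma rolle_aux (a : ℝ) (ha : -1 < a) (p : Polynomial ℝ) {u v s : ℝ} (huv : u < v)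
    (hpos : ∀ x ∈ Set.Ioo u v, 0 < s * x)
    (hu : p.eval u = 0 ∨ u = 0) (hv : p.eval v = 0 ∨ v = 0) :
    ∃ c ∈ Set.Ioo u v, (Psi a p).eval c = 0 := by
  have ha1 : (0:ℝ) < a + 1 := by linarith
  set g : ℝ → ℝ := fun x => (s*x) ^ (a+1) * (Real.exp (-x) * p.eval x) with hg
  have hzero : ∀ w : ℝ, (p.eval w = 0 ∨ w = 0) → g w = 0 := by
    rintro w (h | rfl)
    · simp [hg, h]
    · simp [hg, Real.zero_rpow (by positivity : a + 1 ≠ 0)]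
  have hcont : Continuous g := by
    apply Continuous.mul ?_ ((Real.continuous_exp.comp continuous_neg).mul p.continuous)
    refine continuous_iff_continuousAt.mpr fun x => ?_
    exact (Real.continuousAt_rpow_const _ _ (Or.inr ha1.le)).comp
      ((continuous_mul_left s).continuousAt)
  have hderiv : ∀ x ∈ Set.Ioo u v,
      HasDerivAt g (s * ((s*x)^a * (Real.exp (-x) * (-(Psi a p).eval x)))) x := by
    intro x hx
    have hsx : 0 < s * x := hpos x hx
    have h1 : HasDerivAt (fun x => (s*x) ^ (a+1)) ((a+1) * (s*x)^(a+1-1) * (s*1)) x :=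
      (Real.hasDerivAt_rpow_const (Or.inl hsx.ne')).comp x ((hasDerivAt_id x).const_mul s)
    have h2 : HasDerivAt (fun x => Real.exp (-x)) (Real.exp (-x) * (-1)) x :=
      (Real.hasDerivAt_exp (-x)).comp x (hasDerivAt_neg' x)
    have h3 : HasDerivAt (fun x => p.eval x) (p.derivative.eval x) x := p.hasDerivAt x
    have h := h1.mul (h2.mul h3)
    refine h.congr_deriv ?_
    have e1 : (s*x)^(a+1) = (s*x)^a * (s*x) := Real.rpow_add_one hsx.ne' a
    have e2 : a + 1 - 1 = a := by ring
    rw [e2, e1]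
    simp only [Psi, eval_add, eval_mul, eval_neg, eval_X, eval_sub, eval_C, Pi.mul_apply]
    ring
  obtain ⟨c, hc, hc0⟩ := exists_hasDerivAt_eq_zero huv hcont.continuousOn
    ((hzero u hu).trans (hzero v hv).symm) hderiv
  refine ⟨c, hc, ?_⟩
  have hsc : 0 < s * c := hpos c hc
  have hs : s ≠ 0 := fun h => by simp [h] at hsc
  have hr : (s*c)^a ≠ 0 := (Real.rpow_pos_of_pos hsc a).ne'
  have he : Real.exp (-c) ≠ 0 := (Real.exp_pos _).ne'
  have h4 : -(Psi a p).eval c = 0 := by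
    rcases mul_eq_zero.mp hc0 with h | h
    · exact absurd h hs
    rcases mul_eq_zero.mp h with h | h
    · exact absurd h hr
    rcases mul_eq_zero.mp h with h | h
    · exact absurd h he
    · exact h
  linarith

lemma psi_coeff_top (a : ℝ) (p : Polynomial ℝ) :
    (Psi a p).coeff (p.natDegree + 1) = p.leadingCoeff := by
  have h1 : Psi a p = -(X * derivative p) + (X * p - C (a+1) * p) := by rw [Psi]; ring
  have h2 : p.coeff (p.natDegree + 1) = 0 := coeff_eq_zero_of_natDegree_lt (lt_add_one _)
  rw [h1]
  simp only [coeff_add, coeff_neg, coeff_X_mul, coeff_sub, coeff_C_mul, coeff_derivative, h2,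
    leadingCoeff]
  ring

lemma psi_ne_zero (a : ℝ) {p : Polynomial ℝ} (hp : p ≠ 0) : Psi a p ≠ 0 := by
  intro h
  have := psi_coeff_top a p
  rw [h] at this
  simp at this
  exact hp (leadingCoeff_eq_zero.mp this.symm)

lemma psi_natDegree (a : ℝ) {p : Polynomial ℝ} (hp : p ≠ 0) :
    (Psi a p).natDegree = p.natDegree + 1 := by
  refine le_antisymm ?_ (le_natDegree_of_ne_zero ?_)
  · apply le_trans (natDegree_add_le _ _)
    simp only [max_le_iff]
    constructor
    · apply le_trans (natDegree_mul_le)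
      have := p.natDegree_derivative_le
      simp only [natDegree_neg, natDegree_X]
      omega
    · apply le_trans (natDegree_mul_le)
      have : (X - C (a+1)).natDegree ≤ 1 := natDegree_X_sub_C_le _
      omega
  · rw [psi_coeff_top]
    exact leadingCoeff_ne_zero.mpr hp

lemma psi_rm_ne_zero (a : ℝ) {p : Polynomial ℝ} (hp : p ≠ 0) {t : ℝ} (ht : t ≠ 0) :
    rootMultiplicity t p ≤ rootMultiplicity t (Psi a p) + 1 := by
  rcases Nat.eq_zero_or_pos (rootMultiplicity t p) with h0 | hpos
  · omega
  have hroot : p.IsRoot t := (rootMultiplicity_pos hp).mp hpos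
  have hd : p.derivative ≠ 0 := by
    intro h
    have h1 := p.natDegree_eq_zero_of_derivative_eq_zero h
    have h2 := p.eq_C_of_natDegree_eq_zero h1
    rw [h2] at hroot
    simp only [IsRoot, eval_C] at hroot
    exact hp (by rw [h2, hroot, map_zero])
  have hA : rootMultiplicity t (-X * derivative p) = rootMultiplicity t (derivative p) := by
    rw [rootMultiplicity_mul (mul_ne_zero (neg_ne_zero.mpr X_ne_zero) hd),
      rootMultiplicity_eq_zero (by simp [IsRoot, ht]), zero_add]
  have hB : rootMultiplicity t ((X - C (a+1)) * p)
      = rootMultiplicity t (X - C (a+1)) + rootMultiplicity t p :=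
    rootMultiplicity_mul (mul_ne_zero (X_sub_C_ne_zero _) hp)
  have hder := p.rootMultiplicity_sub_one_le_derivative_rootMultiplicity t
  have hadd := rootMultiplicity_add (p := -X * derivative p) (q := (X - C (a+1)) * p) t
    (by rw [← Psi]; exact psi_ne_zero a hp)
  rw [← Psi] at hadd
  rw [hA, hB] at hadd
  omega

lemma psi_rm_zero (a : ℝ) {p : Polynomial ℝ} (hp : p ≠ 0) :
    rootMultiplicity 0 p ≤ rootMultiplicity 0 (Psi a p) := by
  set m := rootMultiplicity 0 p with hm
  rcases Nat.eq_zero_or_pos m with h0 | hpos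
  · omega
  obtain ⟨k, hk⟩ : ∃ k, m = k + 1 := ⟨m - 1, by omega⟩
  have hdvd : X ^ m ∣ p := by
    have := p.pow_rootMultiplicity_dvd 0
    simpa using this
  obtain ⟨u, hu⟩ := hdvd
  rw [le_rootMultiplicity_iff (psi_ne_zero a hp)]
  have hXm : (X - C (0:ℝ)) ^ m = X ^ m := by simp
  rw [hXm]
  refine ⟨-(C (k+1:ℝ)) * u - X * derivative u + (X - C (a+1)) * u, ?_⟩
  have hder : derivative p = C (k+1:ℝ) * X ^ k * u + X ^ (k+1) * derivative u := by
    rw [hu, hk, derivative_mul, derivative_X_pow]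
    push_cast
    simp [Nat.add_sub_cancel]
  rw [Psi, hder, hu, hk]
  ring


open scoped Classical in
lemma ZR_le_ZR_psi (a : ℝ) (ha : -1 < a) {p : Polynomial ℝ} (hp : p ≠ 0) :
    p.roots.card ≤ (Psi a p).roots.card := by
  set q := Psi a p with hq
  have hqne : q ≠ 0 := psi_ne_zero a hp
  set T : Finset ℝ := insert 0 p.roots.toFinset with hT
  have h0T : (0:ℝ) ∈ T := Finset.mem_insert_self _ _
  set K := T.card - 1 with hK
  have hKcard : T.card = K + 1 := by
    have : 0 < T.card := Finset.card_pos.mpr ⟨0, h0T⟩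
    omega
  set e : Fin (K+1) → ℝ := fun i => ((T.orderIsoOfFin hKcard) i : ℝ) with he
  have hemono : StrictMono e := fun i j hij =>
    Subtype.coe_lt_coe.mpr ((T.orderIsoOfFin hKcard).strictMono hij)
  have heT : ∀ i, e i ∈ T := fun i => (T.orderIsoOfFin hKcard i).2
  have hsurj : ∀ t ∈ T, ∃ i, e i = t := fun t ht =>
    ⟨(T.orderIsoOfFin hKcard).symm ⟨t, ht⟩,
      congrArg Subtype.val ((T.orderIsoOfFin hKcard).apply_symm_apply ⟨t, ht⟩)⟩
  have hTzero : ∀ t ∈ T, p.eval t = 0 ∨ t = 0 := by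
    intro t ht
    rcases Finset.mem_insert.mp ht with rfl | h
    · exact Or.inr rfl
    · exact Or.inl ((mem_roots hp).mp (Multiset.mem_toFinset.mp h))
  have hbetween : ∀ (i : Fin K) (t : ℝ), t ∈ T →
      t ∈ Set.Ioo (e i.castSucc) (e i.succ) → False := by
    intro i t ht hmem
    obtain ⟨j, rfl⟩ := hsurj t ht
    have h1 : i.castSucc < j := hemono.lt_iff_lt.mp hmem.1
    have h2 : j < i.succ := hemono.lt_iff_lt.mp hmem.2
    simp only [Fin.lt_def, Fin.coe_castSucc, Fin.val_succ] at h1 h2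
    omega
  have hrolle : ∀ i : Fin K, ∃ c ∈ Set.Ioo (e i.castSucc) (e i.succ), q.eval c = 0 := by
    intro i
    have hlt : e i.castSucc < e i.succ := hemono Fin.castSucc_lt_succ
    by_cases hcase : 0 ≤ e i.castSucc
    · refine rolle_aux a ha p (s := 1) hlt ?_ (hTzero _ (heT _)) (hTzero _ (heT _))
      intro x hx
      rw [one_mul]
      exact lt_of_le_of_lt hcase hx.1
    · push_neg at hcase
      have hv : e i.succ ≤ 0 := by
        by_contra hv
        push_neg at hv
        exact hbetween i 0 h0T ⟨hcase, hv⟩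
      refine rolle_aux a ha p (s := -1) hlt ?_ (hTzero _ (heT _)) (hTzero _ (heT _))
      intro x hx
      have : x < 0 := lt_of_lt_of_le hx.2 hv
      nlinarith
  choose c hcmem hcq using hrolle
  have hcmono : StrictMono c := by
    intro i j hij
    have h1 : c i < e i.succ := (hcmem i).2
    have h2 : e j.castSucc < c j := (hcmem j).1
    have h3 : e i.succ ≤ e j.castSucc := by
      apply hemono.monotone
      rw [Fin.le_def]
      simp only [Fin.val_succ, Fin.coe_castSucc]
      rw [Fin.lt_def] at hij
      omega
    linarith
  have hcinj : Function.Injective c := hcmono.injective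
  have hcT : ∀ i, c i ∉ T := fun i ht => hbetween i (c i) ht (hcmem i)
  set S : Finset ℝ := T ∪ Finset.image c Finset.univ with hS
  have hsum_le : (∑ t ∈ S, rootMultiplicity t q) ≤ q.roots.card := by
    calc ∑ t ∈ S, rootMultiplicity t q = ∑ t ∈ S, q.roots.count t := by
          simp [count_roots]
      _ = ∑ t ∈ S ∩ q.roots.toFinset, q.roots.count t := by
          refine (Finset.sum_subset Finset.inter_subset_left ?_).symm
          intro x hx hnx
          rw [Multiset.count_eq_zero]
          intro hmem
          exact hnx (Finset.mem_inter.mpr ⟨hx, Multiset.mem_toFinset.mpr hmem⟩)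
      _ ≤ ∑ t ∈ q.roots.toFinset, q.roots.count t :=
          Finset.sum_le_sum_of_subset Finset.inter_subset_right
      _ = q.roots.card := Multiset.toFinset_sum_count_eq _
  have hdisj : Disjoint T (Finset.image c Finset.univ) := by
    rw [Finset.disjoint_right]
    intro x hx hxT
    obtain ⟨i, _, rfl⟩ := Finset.mem_image.mp hx
    exact hcT i hxT
  have hsplit : ∑ t ∈ S, rootMultiplicity t q
      = ∑ t ∈ T, rootMultiplicity t q
        + ∑ t ∈ Finset.image c Finset.univ, rootMultiplicity t q :=
    Finset.sum_union hdisj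
  have himg : ∑ t ∈ Finset.image c Finset.univ, rootMultiplicity t q
      = ∑ i : Fin K, rootMultiplicity (c i) q :=
    Finset.sum_image fun i _ j _ h => hcinj h
  have himg_ge : K ≤ ∑ i : Fin K, rootMultiplicity (c i) q := by
    have h1 : ∀ i : Fin K, 1 ≤ rootMultiplicity (c i) q := fun i =>
      (rootMultiplicity_pos hqne).mpr (hcq i)
    calc K = ∑ _i : Fin K, 1 := by simp
      _ ≤ _ := Finset.sum_le_sum fun i _ => h1 i
  have hTE : (T.erase 0).card = K := by rw [Finset.card_erase_of_mem h0T]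
  have herase_ne : ∀ t ∈ T.erase 0, t ≠ 0 := fun t ht => Finset.ne_of_mem_erase ht
  have hTsum : ∑ t ∈ T, rootMultiplicity t p ≤ ∑ t ∈ T, rootMultiplicity t q + K := by
    rw [← Finset.add_sum_erase T _ h0T, ← Finset.add_sum_erase T (fun t => rootMultiplicity t q) h0T]
    have h1 : rootMultiplicity 0 p ≤ rootMultiplicity 0 q := psi_rm_zero a hp
    have h2 : ∑ t ∈ T.erase 0, rootMultiplicity t p
        ≤ (∑ t ∈ T.erase 0, rootMultiplicity t q) + K := by
      rw [← hTE]
      calc ∑ t ∈ T.erase 0, rootMultiplicity t p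
          ≤ ∑ t ∈ T.erase 0, (rootMultiplicity t q + 1) :=
            Finset.sum_le_sum fun t ht => psi_rm_ne_zero a hp (herase_ne t ht)
        _ = (∑ t ∈ T.erase 0, rootMultiplicity t q) + (T.erase 0).card := by
            simp [Finset.sum_add_distrib]
    omega
  have hZRp : p.roots.card = ∑ t ∈ T, rootMultiplicity t p := by
    rw [hT, Finset.sum_insert_of_eq_zero_if_notMem]
    · rw [← Multiset.toFinset_sum_count_eq p.roots]
      exact Finset.sum_congr rfl fun t _ => count_roots p
    · intro h0
      exact rootMultiplicity_eq_zero fun hroot =>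
        h0 (Multiset.mem_toFinset.mpr ((mem_roots hp).mpr hroot))
  omega

open scoped Classical in
lemma ZC_add_ZR {p : Polynomial ℝ} (hp : p ≠ 0) : ZC p + ZR p = p.natDegree := by
  have hinj : Function.Injective (algebraMap ℝ ℂ) := (algebraMap ℝ ℂ).injective
  set P := p.map (algebraMap ℝ ℂ) with hPdef
  have hsplit : Splits P := IsAlgClosed.splits P
  have hcard : Multiset.card P.roots = p.natDegree := by
    rw [← hsplit.natDegree_eq_card_roots]; exact natDegree_map _
  have hfilt : (P.roots.filter fun z => z.im ≠ 0).card
      + (P.roots.filter fun z => ¬ z.im ≠ 0).card = Multiset.card P.roots := by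
    rw [← Multiset.card_add, Multiset.filter_add_not]
  have hreal : (P.roots.filter fun z => ¬ z.im ≠ 0) = p.roots.map (algebraMap ℝ ℂ) := by
    refine Multiset.ext.mpr fun z => ?_
    rw [Multiset.count_filter]
    by_cases hz : z.im = 0
    · rw [if_pos (by simp [hz])]
      have hzre : (algebraMap ℝ ℂ) z.re = z := Complex.ext (by simp) (by simp [hz])
      rw [← hzre, Multiset.count_map_eq_count' _ _ hinj, count_roots, count_roots,
        ← eq_rootMultiplicity_map hinj]
    · rw [if_neg (by simp [hz]), eq_comm, Multiset.count_eq_zero]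
      intro hmem
      obtain ⟨t, _, rfl⟩ := Multiset.mem_map.mp hmem
      simp at hz
  have : ZR p = (p.roots.map (algebraMap ℝ ℂ)).card := (Multiset.card_map _ _).symm
  rw [ZC, ZR] at *
  rw [← hPdef, ← hcard, ← hfilt, hreal, Multiset.card_map]

open scoped Classical in
lemma ZC_even (p : Polynomial ℝ) : Even (ZC p) := by
  by_cases hp : p = 0
  · simp [ZC, hp]
  set P := p.map (algebraMap ℝ ℂ) with hPdef
  set M := P.roots with hMdef
  have hsplitC : Splits P := IsAlgClosed.splits P
  have hmapP : P.map (starRingEnd ℂ) = P := by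
    rw [hPdef, Polynomial.map_map]
    congr 1
    exact RingHom.ext fun x => by simp
  have hconj : M.map (starRingEnd ℂ) = M := by
    rw [hMdef, show P.roots.map (starRingEnd ℂ) = (P.map (starRingEnd ℂ)).roots from
      (hsplitC.roots_map _).symm, hmapP]
  have h1 : (M.filter fun z => z.im < 0) = (M.filter fun z => 0 < z.im).map (starRingEnd ℂ) := by
    conv_lhs => rw [← hconj]
    rw [Multiset.filter_map]
    congr 1
    refine Multiset.filter_congr fun z _ => ?_
    simp [Function.comp, Complex.conj_im, neg_lt_zero]
  have h2 : (M.filter fun z => z.im ≠ 0)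
      = (M.filter fun z => z.im < 0) + (M.filter fun z => 0 < z.im) := by
    rw [Multiset.filter_add_filter]
    have hempty : (M.filter fun z => z.im < 0 ∧ 0 < z.im) = 0 :=
      Multiset.filter_eq_nil.mpr fun z _ h => absurd h.2 (not_lt.mpr h.1.le)
    have hiff : (M.filter fun z => z.im < 0 ∨ 0 < z.im) = (M.filter fun z => z.im ≠ 0) :=
      Multiset.filter_congr fun z _ => lt_or_lt_iff_ne
    rw [hempty, hiff, add_zero]
  have : ZC p = 2 * (M.filter fun z => 0 < z.im).card := by
    rw [ZC, ← hPdef, ← hMdef, h2, Multiset.card_add, h1, Multiset.card_map]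
    ring
  rw [this]
  exact even_two_mul _

theorem stmt10 (a : ℝ) (ha : -1 < a) (p : Polynomial ℝ) :
    ZC (Psi a p) ≤ ZC p := by
  by_cases hp : p = 0
  · rw [hp]
    simp [Psi]
  · have hqne : Psi a p ≠ 0 := psi_ne_zero a hp
    have hA := ZC_add_ZR hp
    have hAq := ZC_add_ZR hqne
    have hdeg := psi_natDegree a hp
    have hD : ZR p ≤ ZR (Psi a p) := ZR_le_ZR_psi a ha hp
    obtain ⟨m, hm⟩ := ZC_even p
    obtain ⟨k, hk⟩ := ZC_even (Psi a p)
    rw [hdeg] at hAq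
    omega
end
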